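/- In the data center model, fix j ∈ {1,...,m} and consider two policies d and d' that agree in all components except d_{n,j} and d'_{n,j}, with d_{n,j}, d'_{n,j} ∈ {0,1,...,j} and d'_{n,j} > d_{n,j}. Then the performance difference equation η^{d'} − η^{d} = μ_2 π^{(d')}(n,j) (d'_{n,j} − d_{n,j}) [G^{(d)}(n,j) + c] holds, where G^{(d)}(n,j) = g^{(d)}(n,j−1) − g^{(d)}(n,j) is the perturbation realization factor, g^{(d)} solves the Poisson equation for policy d, and c = R − (P_{2,W} − P_{2,S})C_1/μ_2. -/

import Mathlib

open Finset

/-- Death rate of the data-center birth-death chain at state index `k`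
(states `0..n` are `(k,0)`; states `n+1..n+m` are `(n, k-n)`). -/
noncomputable def dcDeath (n : ℕ) (μ1 μ2 : ℝ) (d : ℕ → ℕ) (k : ℕ) : ℝ :=
  if k ≤ n then (k : ℝ) * μ1
  else (n : ℝ) * μ1 + (min (d (k - n)) (k - n) : ℝ) * μ2

/-- Policy-dependent generator of the data-center birth-death chain. -/
noncomputable def dcGen (n m : ℕ) (lam μ1 μ2 : ℝ) (d : ℕ → ℕ) (k l : ℕ) : ℝ :=
  if l = k + 1 then lam
  else if l + 1 = k then dcDeath n μ1 μ2 d k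
  else if l = k then -((if k < n + m then lam else 0) + dcDeath n μ1 μ2 d k)
  else 0

/-- `π` is a stationary probability vector for the policy-`d` chain. -/
def dcStationary (n m : ℕ) (lam μ1 μ2 : ℝ) (d : ℕ → ℕ) (π : ℕ → ℝ) : Prop :=
  (∀ l ∈ Finset.range (n + m + 1),
    ∑ k ∈ Finset.range (n + m + 1), π k * dcGen n m lam μ1 μ2 d k l = 0) ∧
  (∑ k ∈ Finset.range (n + m + 1), π k = 1) ∧
  (∀ k ∈ Finset.range (n + m + 1), 0 ≤ π k)

/-- Reward (profit rate) function of the data center at state index `k`. -/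
noncomputable def dcReward (n m : ℕ) (lam μ1 μ2 R P1W P2W P2S C1 C21 C22 C3 C4 : ℝ)
    (d : ℕ → ℕ) (k : ℕ) : ℝ :=
  if k ≤ n then
    R * ((k : ℝ) * μ1) - ((n : ℝ) * P1W + (m : ℝ) * P2S) * C1 - (k : ℝ) * C21
  else
    R * ((n : ℝ) * μ1 + (min (k - n) (d (k - n)) : ℝ) * μ2)
      - ((n : ℝ) * P1W + (d (k - n) : ℝ) * P2W + ((m : ℝ) - (d (k - n) : ℝ)) * P2S) * C1
      - ((n : ℝ) * C21 + ((k - n : ℕ) : ℝ) * C22)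
      - (n : ℝ) * μ1 * C3
      - (if k - n = m then lam * C4 else 0)

/-- `g` solves the Poisson equation `B^{(d)} g = η e - f` for the policy-`d` chain. -/
def dcPoisson (n m : ℕ) (lam μ1 μ2 : ℝ) (d : ℕ → ℕ) (f : ℕ → ℝ) (η : ℝ)
    (g : ℕ → ℝ) : Prop :=
  ∀ k ∈ Finset.range (n + m + 1),
    ∑ l ∈ Finset.range (n + m + 1), dcGen n m lam μ1 μ2 d k l * g l = η - f k

/-- performance difference equation: if `d` and `d'` agree except
at component `j0` with `d_{n,j0} < d'_{n,j0} ≤ j0`, then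
`η^{d'} − η^{d} = μ₂ π^{(d')}(n,j0)(d'_{n,j0} − d_{n,j0})[G^{(d)}(n,j0) + c]`,
where `G^{(d)}(n,j0) = g^{(d)}(n,j0−1) − g^{(d)}(n,j0)` and
`c = R − (P_{2,W}−P_{2,S})C₁/μ₂`. -/
theorem stmt7 (n m : ℕ) (hn : 1 ≤ n) (hm : 1 ≤ m)
    (lam μ1 μ2 R P1W P2W P2S C1 C21 C22 C3 C4 : ℝ)
    (hlam : 0 < lam) (hμ1 : 0 < μ1) (hμ2 : 0 < μ2)
    (hP2S : 0 < P2S) (hP : P2S < P2W) (hC1 : 0 < C1)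
    (j0 : ℕ) (hj1 : 1 ≤ j0) (hj2 : j0 ≤ m)
    (d d' : ℕ → ℕ) (hd : ∀ j, d j ≤ m) (hd' : ∀ j, d' j ≤ m)
    (hagree : ∀ j, j ≠ j0 → d j = d' j)
    (hdle : d j0 ≤ j0) (hd'le : d' j0 ≤ j0) (hlt : d j0 < d' j0)
    (π π' : ℕ → ℝ)
    (hπ : dcStationary n m lam μ1 μ2 d π)
    (hπ' : dcStationary n m lam μ1 μ2 d' π')
    (η η' : ℝ)
    (hη : η = ∑ k ∈ Finset.range (n + m + 1),
      π k * dcReward n m lam μ1 μ2 R P1W P2W P2S C1 C21 C22 C3 C4 d k)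
    (hη' : η' = ∑ k ∈ Finset.range (n + m + 1),
      π' k * dcReward n m lam μ1 μ2 R P1W P2W P2S C1 C21 C22 C3 C4 d' k)
    (g : ℕ → ℝ)
    (hg : dcPoisson n m lam μ1 μ2 d
      (dcReward n m lam μ1 μ2 R P1W P2W P2S C1 C21 C22 C3 C4 d) η g)
    (c : ℝ) (hc : c = R - (P2W - P2S) * C1 / μ2) :
    η' - η = μ2 * π' (n + j0) * ((d' j0 : ℝ) - (d j0 : ℝ))
      * ((g (n + j0 - 1) - g (n + j0)) + c) := by
  unfold dcStationary at hπ'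
  unfold dcPoisson at hg
  obtain ⟨hstat', hsum', -⟩ := hπ'
  set N := n + m + 1 with hNdef
  set k0 := n + j0 with hk0def
  set f := dcReward n m lam μ1 μ2 R P1W P2W P2S C1 C21 C22 C3 C4 d with hfdef
  set f' := dcReward n m lam μ1 μ2 R P1W P2W P2S C1 C21 C22 C3 C4 d' with hf'def
  set B := dcGen n m lam μ1 μ2 d with hBdef
  set B' := dcGen n m lam μ1 μ2 d' with hB'def
  set δ : ℝ := μ2 * ((d' j0 : ℝ) - (d j0 : ℝ)) with hδdef
  clear_value k0
  have hkn : ¬ k0 ≤ n := by omega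
  have hsub : k0 - n = j0 := by omega
  have hsubR : ((k0 : ℝ) - (n : ℝ)) = (j0 : ℝ) := by
    rw [hk0def]; push_cast; ring
  have hk0mem : k0 ∈ Finset.range N := by
    simp only [Finset.mem_range, hNdef, hk0def]; omega
  have hk0mem' : k0 - 1 ∈ Finset.range N := by
    simp only [Finset.mem_range, hNdef, hk0def]; omega
  -- death rates at k0
  have hdk0 : dcDeath n μ1 μ2 d k0 = (n : ℝ) * μ1 + (d j0 : ℝ) * μ2 := by
    unfold dcDeath
    rw [if_neg hkn, hsub, hsubR, min_eq_left (Nat.cast_le.mpr hdle)]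
  have hd'k0 : dcDeath n μ1 μ2 d' k0 = (n : ℝ) * μ1 + (d' j0 : ℝ) * μ2 := by
    unfold dcDeath
    rw [if_neg hkn, hsub, hsubR, min_eq_left (Nat.cast_le.mpr hd'le)]
  -- generators agree off row k0
  have hgen : ∀ k, k ≠ k0 → ∀ l, B' k l = B k l := by
    intro k hk l
    have hdeath : dcDeath n μ1 μ2 d' k = dcDeath n μ1 μ2 d k := by
      unfold dcDeath
      by_cases h : k ≤ n
      · rw [if_pos h, if_pos h]
      · rw [if_neg h, if_neg h, hagree (k - n) (by omega)]
    rw [hBdef, hB'def]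
    unfold dcGen
    rw [hdeath]
  -- generator difference on row k0
  have hrow : ∀ l, B' k0 l - B k0 l
      = δ * ((if l = k0 - 1 then (1:ℝ) else 0) - if l = k0 then 1 else 0) := by
    intro l
    rw [hBdef, hB'def]
    unfold dcGen
    by_cases h1 : l = k0 + 1
    · rw [if_pos h1, if_pos h1, if_neg (show ¬ l = k0 - 1 by omega),
        if_neg (show ¬ l = k0 by omega)]
      ring
    · rw [if_neg h1, if_neg h1]
      by_cases h2 : l + 1 = k0
      · rw [if_pos h2, if_pos h2, hdk0, hd'k0, if_pos (show l = k0 - 1 by omega),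
          if_neg (show ¬ l = k0 by omega)]
        ring
      · rw [if_neg h2, if_neg h2]
        by_cases h3 : l = k0
        · rw [if_pos h3, if_pos h3, hdk0, hd'k0,
            if_neg (show ¬ l = k0 - 1 by omega), if_pos h3]
          ring
        · rw [if_neg h3, if_neg h3, if_neg (show ¬ l = k0 - 1 by omega), if_neg h3]
          ring
  -- rewards agree off k0
  have hfeq : ∀ k, k ≠ k0 → f' k = f k := by
    intro k hk
    rw [hfdef, hf'def]
    unfold dcReward
    by_cases h : k ≤ n
    · rw [if_pos h, if_pos h]
    · rw [if_neg h, if_neg h, hagree (k - n) (by omega)]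
  -- reward difference at k0
  have hfk0 : f' k0 - f k0 = δ * c := by
    rw [hfdef, hf'def]
    unfold dcReward
    rw [if_neg hkn, if_neg hkn, hsub, hsubR,
      min_eq_right (Nat.cast_le.mpr hdle), min_eq_right (Nat.cast_le.mpr hd'le),
      hc, hδdef]
    field_simp
    ring
  -- the Poisson-equation sum
  have hS1 : ∑ k ∈ Finset.range N, π' k * (∑ l ∈ Finset.range N, B k l * g l)
      = η - ∑ k ∈ Finset.range N, π' k * f k := by
    rw [Finset.sum_congr rfl (fun k hk => by rw [hg k hk])]
    have : ∀ k ∈ Finset.range N, π' k * (η - f k) = π' k * η - π' k * f k := by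
      intro k _; ring
    rw [Finset.sum_congr rfl this, Finset.sum_sub_distrib, ← Finset.sum_mul, hsum',
      one_mul]
  -- the stationarity sum
  have hS1' : ∑ k ∈ Finset.range N, π' k * (∑ l ∈ Finset.range N, B' k l * g l)
      = 0 := by
    have h1 : ∀ k ∈ Finset.range N,
        π' k * (∑ l ∈ Finset.range N, B' k l * g l)
          = ∑ l ∈ Finset.range N, π' k * B' k l * g l := by
      intro k _
      rw [Finset.mul_sum]
      exact Finset.sum_congr rfl (fun l _ => by ring)
    rw [Finset.sum_congr rfl h1, Finset.sum_comm]
    apply Finset.sum_eq_zero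
    intro l hl
    rw [← Finset.sum_mul, hstat' l hl, zero_mul]
  -- difference of the two generator sums
  have hdiff : (∑ k ∈ Finset.range N, π' k * (∑ l ∈ Finset.range N, B' k l * g l))
      - ∑ k ∈ Finset.range N, π' k * (∑ l ∈ Finset.range N, B k l * g l)
      = π' k0 * (δ * (g (k0 - 1) - g k0)) := by
    rw [← Finset.sum_sub_distrib]
    have h1 : ∀ k ∈ Finset.range N,
        π' k * (∑ l ∈ Finset.range N, B' k l * g l)
          - π' k * (∑ l ∈ Finset.range N, B k l * g l)
          = π' k * ∑ l ∈ Finset.range N, (B' k l - B k l) * g l := by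
      intro k _
      rw [Finset.mul_sum, Finset.mul_sum, Finset.mul_sum, ← Finset.sum_sub_distrib]
      exact Finset.sum_congr rfl (fun l _ => by ring)
    rw [Finset.sum_congr rfl h1, Finset.sum_eq_single k0]
    · have hinner : ∑ l ∈ Finset.range N, (B' k0 l - B k0 l) * g l
          = δ * (g (k0 - 1) - g k0) := by
        have h2 : ∀ l ∈ Finset.range N, (B' k0 l - B k0 l) * g l
            = δ * ((if l = k0 - 1 then g l else 0) - (if l = k0 then g l else 0)) := by
          intro l _
          rw [hrow l]
          split_ifs <;> ring
        rw [Finset.sum_congr rfl h2, ← Finset.mul_sum, Finset.sum_sub_distrib,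
          Finset.sum_ite_eq', Finset.sum_ite_eq', if_pos hk0mem', if_pos hk0mem]
      rw [hinner]
    · intro k _ hne
      rw [Finset.sum_eq_zero (fun l _ => by rw [hgen k hne l]; ring), mul_zero]
    · intro h; exact absurd hk0mem h
  -- reward sum difference
  have hfd : (∑ k ∈ Finset.range N, π' k * f' k) - ∑ k ∈ Finset.range N, π' k * f k
      = π' k0 * (δ * c) := by
    rw [← Finset.sum_sub_distrib]
    have h1 : ∀ k ∈ Finset.range N, π' k * f' k - π' k * f k
        = π' k * (f' k - f k) := by intro k _; ring
    rw [Finset.sum_congr rfl h1, Finset.sum_eq_single k0]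
    · rw [hfk0]
    · intro k _ hne; rw [hfeq k hne]; ring
    · intro h; exact absurd hk0mem h
  have hgoal : η' - η = π' k0 * (δ * c) + π' k0 * (δ * (g (k0 - 1) - g k0)) := by
    rw [hη']
    rw [hS1'] at hdiff
    linarith [hfd, hdiff, hS1]
  rw [hgoal, hδdef]
  ring
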